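/- Let X and Y be Banach spaces and let u be an extreme point of the closed unit ball of X⊗̂_πY. If u ∈ INA_π(X⊗̂_πY) is witnessed by a Radon measure on B_X×B_Y, then u is an elementary tensor, i.e. u = x₀⊗y₀ for some x₀ ∈ B_X and y₀ ∈ B_Y. -/

import Mathlib

open MeasureTheory Metric Set Filter TopologicalSpace

noncomputable section

variable {𝕜 : Type*} [RCLike 𝕜]
variable {X : Type*} [NormedAddCommGroup X] [NormedSpace 𝕜 X]
variable {Y : Type*} [NormedAddCommGroup Y] [NormedSpace 𝕜 Y]
variable {T : Type*} [NormedAddCommGroup T] [NormedSpace 𝕜 T]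
variable [NormedSpace ℝ T] [IsScalarTower ℝ 𝕜 T]

/-- `T`, together with the continuous bilinear map `tmul`, is a realization of the
projective tensor product `X ⊗̂_π Y`: it is complete, the span of elementary tensors
`x ⊗ y = tmul x y` is dense, and on that span the norm is the projective norm. -/
structure IsProjTensor (tmul : X →L[𝕜] Y →L[𝕜] T) : Prop where
  complete : CompleteSpace T
  dense_span :
    Dense ((Submodule.span 𝕜 (Set.range fun p : X × Y => tmul p.1 p.2) : Submodule 𝕜 T) : Set T)
  norm_eq : ∀ z : T,
    z ∈ Submodule.span 𝕜 (Set.range fun p : X × Y => tmul p.1 p.2) →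
    ‖z‖ = sInf { c : ℝ | ∃ (m : ℕ) (x : Fin m → X) (y : Fin m → Y),
      z = ∑ i, tmul (x i) (y i) ∧ c = ∑ i, ‖x i‖ * ‖y i‖ }

/-- `u` attains its projective norm (`u ∈ NA_π(X ⊗̂_π Y)`): it admits a representation
`u = ∑ λ_n x_n ⊗ y_n` with `x_n ∈ B_X`, `y_n ∈ B_Y`, `λ_n ≥ 0` and `∑ λ_n = ‖u‖_π`. -/
def NApi (tmul : X →L[𝕜] Y →L[𝕜] T) (u : T) : Prop :=
  ∃ (x : ℕ → X) (y : ℕ → Y) (l : ℕ → ℝ),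
    (∀ n, ‖x n‖ ≤ 1) ∧ (∀ n, ‖y n‖ ≤ 1) ∧ (∀ n, 0 ≤ l n) ∧
    HasSum (fun n => (l n : 𝕜) • tmul (x n) (y n)) u ∧ HasSum l ‖u‖

/-- `u` is finitely norm-attaining (`u ∈ FNA_π(X ⊗̂_π Y)`): it admits a finite optimal
representation `u = ∑_{k<m} x_k ⊗ y_k` with `∑_{k<m} ‖x_k‖‖y_k‖ = ‖u‖_π`. -/
def FNApi (tmul : X →L[𝕜] Y →L[𝕜] T) (u : T) : Prop :=
  ∃ (m : ℕ) (x : Fin m → X) (y : Fin m → Y),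
    u = ∑ i, tmul (x i) (y i) ∧ ∑ i, ‖x i‖ * ‖y i‖ = ‖u‖

/-- `u` is an integral projective norm-attaining tensor witnessed by `μ`: `μ` is a finite
positive Borel measure concentrated on `B_X × B_Y`, the map `(x, y) ↦ x ⊗ y` is
`μ`-Bochner integrable, `u = ∫ x ⊗ y ∂μ` and `‖μ‖ = ‖u‖_π`. -/
def INApiWitness [MeasurableSpace X] [MeasurableSpace Y]
    (tmul : X →L[𝕜] Y →L[𝕜] T) (u : T) (μ : Measure (X × Y)) : Prop :=
  IsFiniteMeasure μ ∧
  μ ((closedBall (0 : X) 1 ×ˢ closedBall (0 : Y) 1)ᶜ) = 0 ∧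
  Integrable (fun p : X × Y => tmul p.1 p.2) μ ∧
  u = ∫ p, tmul p.1 p.2 ∂μ ∧
  (μ Set.univ).toReal = ‖u‖

/-- `u ∈ INA_π(X ⊗̂_π Y)`: `u` is an integral projective norm-attaining tensor. -/
def INApi [MeasurableSpace X] [MeasurableSpace Y]
    (tmul : X →L[𝕜] Y →L[𝕜] T) (u : T) : Prop :=
  ∃ μ : Measure (X × Y), INApiWitness tmul u μ


/-- Proposition 2.13: an extreme point of the unit ball which is integral projective
norm-attaining, witnessed by a Radon measure, is an elementary tensor. -/
theorem stmt_8 [CompleteSpace X] [CompleteSpace Y]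
    [MeasurableSpace X] [BorelSpace X] [MeasurableSpace Y] [BorelSpace Y]
    (tmul : X →L[𝕜] Y →L[𝕜] T) (hT : IsProjTensor tmul)
    (u : T) (hu : u ∈ Set.extremePoints ℝ (closedBall (0 : T) 1))
    (μ : Measure (X × Y)) (hw : INApiWitness tmul u μ)
    (hInner : μ.InnerRegular) (hOuter : μ.OuterRegular) :
    ∃ (x : X) (y : Y), ‖x‖ ≤ 1 ∧ ‖y‖ ≤ 1 ∧ u = tmul x y := by
  classical
  haveI : CompleteSpace T := hT.complete
  obtain ⟨hfin, hnull, hint, hrepr, hmass⟩ := hw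
  haveI := hfin
  -- the projective norm bound on elementary tensors
  have hle : ∀ (x : X) (y : Y), ‖tmul x y‖ ≤ ‖x‖ * ‖y‖ := by
    intro x y
    have hmem : tmul x y ∈ Submodule.span 𝕜 (Set.range fun p : X × Y => tmul p.1 p.2) :=
      Submodule.subset_span ⟨(x, y), rfl⟩
    rw [hT.norm_eq _ hmem]
    apply csInf_le
    · refine ⟨0, ?_⟩
      rintro c ⟨m, xs, ys, -, rfl⟩
      exact Finset.sum_nonneg fun i _ => mul_nonneg (norm_nonneg _) (norm_nonneg _)
    · exact ⟨1, ![x], ![y], by simp, by simp⟩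
  have humem := hu.1
  have hub : ‖u‖ ≤ 1 := mem_closedBall_zero_iff.mp humem
  by_cases h1 : ‖u‖ = 1
  swap
  · -- if ‖u‖ < 1 then u must be 0 (by extremality), and 0 = tmul 0 0
    have hu0 : u = 0 := by
      by_contra h0
      have hn0 : (0:ℝ) < ‖u‖ := norm_pos_iff.mpr h0
      have hlt : ‖u‖ < 1 := lt_of_le_of_ne hub h1
      have ha : ‖u‖⁻¹ • u ∈ closedBall (0 : T) 1 := by
        rw [mem_closedBall_zero_iff, norm_smul, norm_inv, norm_norm,
          inv_mul_cancel₀ hn0.ne']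
      have hb : (0 : T) ∈ closedBall (0 : T) 1 := mem_closedBall_self zero_le_one
      have hseg : u ∈ openSegment ℝ (‖u‖⁻¹ • u) (0 : T) := by
        refine ⟨‖u‖, 1 - ‖u‖, hn0, by linarith, by ring, ?_⟩
        rw [smul_smul, mul_inv_cancel₀ hn0.ne', one_smul, smul_zero, add_zero]
      have := hu.2 hb ha (by rw [openSegment_symm]; exact hseg)
      exact h0 this.symm
    exact ⟨0, 0, by simp, by simp, by simp [hu0]⟩
  · -- main case: μ is a probability measure
    have hprob : μ Set.univ = 1 := by
      rw [h1] at hmass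
      exact (ENNReal.toReal_eq_one_iff _).mp hmass
    haveI : IsProbabilityMeasure μ := ⟨hprob⟩
    have haeB : ∀ᵐ p ∂μ, p ∈ closedBall (0:X) 1 ×ˢ closedBall (0:Y) 1 := by
      rw [ae_iff]
      exact hnull
    have hbound : ∀ᵐ p ∂μ, ‖tmul p.1 p.2‖ ≤ 1 := by
      filter_upwards [haeB] with p hp
      obtain ⟨hx, hy⟩ := hp
      calc ‖tmul p.1 p.2‖ ≤ ‖p.1‖ * ‖p.2‖ := hle _ _
        _ ≤ 1 := mul_le_one₀ (mem_closedBall_zero_iff.mp hx) (norm_nonneg _)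
            (mem_closedBall_zero_iff.mp hy)
    -- key: set integrals of the elementary-tensor map are multiples of u
    have key : ∀ A : Set (X × Y), MeasurableSet A →
        ∫ p in A, tmul p.1 p.2 ∂μ = (μ A).toReal • u := by
      intro A hA
      set t := (μ A).toReal with ht
      have hAne : μ A ≠ ⊤ := measure_ne_top μ A
      have hAcne : μ Aᶜ ≠ ⊤ := measure_ne_top μ Aᶜ
      have hsum : t + (μ Aᶜ).toReal = 1 := by
        rw [← ENNReal.toReal_add hAne hAcne, measure_add_measure_compl hA, hprob,
          ENNReal.toReal_one]
      have ht0 : 0 ≤ t := ENNReal.toReal_nonneg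
      have hIA : ‖∫ p in A, tmul p.1 p.2 ∂μ‖ ≤ t := by
        have := norm_setIntegral_le_of_norm_le_const_ae (μ := μ) (s := A)
          (lt_top_iff_ne_top.mpr hAne) (ae_restrict_of_ae hbound)
        simpa [Measure.real] using this
      have hIAc : ‖∫ p in Aᶜ, tmul p.1 p.2 ∂μ‖ ≤ (μ Aᶜ).toReal := by
        have := norm_setIntegral_le_of_norm_le_const_ae (μ := μ) (s := Aᶜ)
          (lt_top_iff_ne_top.mpr hAcne) (ae_restrict_of_ae hbound)
        simpa [Measure.real] using this
      have hsplit : (∫ p in A, tmul p.1 p.2 ∂μ) + ∫ p in Aᶜ, tmul p.1 p.2 ∂μ = u := by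
        rw [integral_add_compl hA hint, ← hrepr]
      rcases eq_or_lt_of_le ht0 with h0 | h0
      · -- t = 0
        have : μ A = 0 := by
          rcases (ENNReal.toReal_eq_zero_iff _).mp h0.symm with h | h
          · exact h
          · exact absurd h hAne
        rw [← h0, zero_smul, Measure.restrict_eq_zero.mpr this, integral_zero_measure]
      rcases eq_or_lt_of_le (by linarith [ENNReal.toReal_nonneg (a := μ Aᶜ)] : t ≤ 1)
        with h1' | h1'
      · -- t = 1
        have hc0 : μ Aᶜ = 0 := by
          have : (μ Aᶜ).toReal = 0 := by linarith
          rcases (ENNReal.toReal_eq_zero_iff _).mp this with h | h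
          · exact h
          · exact absurd h hAcne
        rw [h1', one_smul, ← hsplit, Measure.restrict_eq_zero.mpr hc0,
          integral_zero_measure, add_zero]
      · -- 0 < t < 1 : use extremality
        set a : T := t⁻¹ • ∫ p in A, tmul p.1 p.2 ∂μ with haa
        set b : T := (1 - t)⁻¹ • ∫ p in Aᶜ, tmul p.1 p.2 ∂μ with hbb
        have htne : t ≠ 0 := h0.ne'
        have h1tne : (1:ℝ) - t ≠ 0 := by linarith
        have hcA : (μ Aᶜ).toReal = 1 - t := by linarith
        have ha : a ∈ closedBall (0 : T) 1 := by
          rw [mem_closedBall_zero_iff, haa, norm_smul, norm_inv, Real.norm_of_nonneg ht0]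
          calc t⁻¹ * ‖∫ p in A, tmul p.1 p.2 ∂μ‖ ≤ t⁻¹ * t := by
                exact mul_le_mul_of_nonneg_left hIA (inv_nonneg.mpr ht0)
            _ = 1 := inv_mul_cancel₀ htne
        have hb : b ∈ closedBall (0 : T) 1 := by
          rw [mem_closedBall_zero_iff, hbb, norm_smul, norm_inv,
            Real.norm_of_nonneg (by linarith : (0:ℝ) ≤ 1 - t)]
          calc (1-t)⁻¹ * ‖∫ p in Aᶜ, tmul p.1 p.2 ∂μ‖ ≤ (1-t)⁻¹ * (1 - t) := by
                refine mul_le_mul_of_nonneg_left ?_ (inv_nonneg.mpr (by linarith))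
                rw [← hcA]; exact hIAc
            _ = 1 := inv_mul_cancel₀ h1tne
        have hta : t • a = ∫ p in A, tmul p.1 p.2 ∂μ := by
          rw [haa, smul_smul, mul_inv_cancel₀ htne, one_smul]
        have htb : (1 - t) • b = ∫ p in Aᶜ, tmul p.1 p.2 ∂μ := by
          rw [hbb, smul_smul, mul_inv_cancel₀ h1tne, one_smul]
        have hseg : u ∈ openSegment ℝ a b :=
          ⟨t, 1 - t, h0, by linarith, by ring, by rw [hta, htb]; exact hsplit⟩
        have hau := hu.2 ha hb hseg
        rw [← hta, hau]
    -- conclude: the map is a.e. equal to u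
    have haeu : (fun p : X × Y => tmul p.1 p.2) =ᵐ[μ] fun _ => u := by
      refine ae_eq_of_forall_setIntegral_eq_of_sigmaFinite
        (fun s hs _ => hint.integrableOn) (fun s hs _ => (integrable_const u).integrableOn)
        (fun s hs _ => ?_)
      rw [key s hs, setIntegral_const]
      rfl
    have hne : μ ≠ 0 := by
      intro h
      rw [h] at hprob
      simp at hprob
    haveI : (ae μ).NeBot := ae_neBot.mpr hne
    obtain ⟨p, hpB, hpu⟩ := (haeB.and haeu).exists
    exact ⟨p.1, p.2, mem_closedBall_zero_iff.mp hpB.1, mem_closedBall_zero_iff.mp hpB.2,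
      hpu.symm⟩
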